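/- Let ε > 0 and let v : (0,∞) → ℝ be continuously differentiable, with v(r) = −1 for all sufficiently small r > 0 and v(r) = 1 for all sufficiently large r. Then ∫₀^∞ [ (ε/2) v'(r)² + (1/(2ε)) (v(r)² − 1)² ] dr ≥ 4/3. -/

import Mathlib

open MeasureTheory

/-- Modica–Mortola type lower bound (2.12): any C¹ transition on (0,∞)
from −1 (near 0) to 1 (for large r) has energy at least 4/3. -/
theorem energy_lower_bound (ε : ℝ) (hε : 0 < ε) (v : ℝ → ℝ)
    (hv : ContDiffOn ℝ 1 v (Set.Ioi 0))
    (h0 : ∃ δ > (0 : ℝ), ∀ r : ℝ, 0 < r → r < δ → v r = -1)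
    (h1 : ∃ M : ℝ, ∀ r : ℝ, M ≤ r → v r = 1) :
    ENNReal.ofReal (4 / 3) ≤
      ∫⁻ r in Set.Ioi (0 : ℝ),
        ENNReal.ofReal
          (ε / 2 * (deriv v r) ^ 2 + 1 / (2 * ε) * ((v r) ^ 2 - 1) ^ 2) := by
  obtain ⟨δ, hδ, hsmall⟩ := h0
  obtain ⟨M, hM⟩ := h1
  set a : ℝ := δ / 2 with ha_def
  set b : ℝ := max M (a + 1) with hb_def
  have ha0 : 0 < a := by positivity
  have haδ : a < δ := by simp only [ha_def]; linarith
  have hab : a ≤ b := le_trans (by linarith) (le_max_right _ _)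
  have hva : v a = -1 := hsmall a ha0 haδ
  have hvb : v b = 1 := hM b (le_max_left _ _)
  -- the derivative of g = v - v^3/3
  set G : ℝ → ℝ := fun r => (1 - v r ^ 2) * deriv v r with hG_def
  set g : ℝ → ℝ := fun r => v r - v r ^ 3 / 3 with hg_def
  have hsub : Set.Icc a b ⊆ Set.Ioi (0 : ℝ) := fun r hr => lt_of_lt_of_le ha0 hr.1
  have hderiv : ∀ r ∈ Set.uIcc a b, HasDerivAt g (G r) r := by
    intro r hr
    rw [Set.uIcc_of_le hab] at hr
    have hr0 : r ∈ Set.Ioi (0 : ℝ) := hsub hr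
    have hd : DifferentiableAt ℝ v r :=
      (hv.contDiffAt (Ioi_mem_nhds hr0)).differentiableAt one_ne_zero
    have hdv : HasDerivAt v (deriv v r) r := hd.hasDerivAt
    have h3 : HasDerivAt (fun x => v x ^ 3 / 3) ((3 : ℕ) * v r ^ 2 * deriv v r / 3) r := by
      exact (hdv.pow 3).div_const 3
    have := hdv.sub h3
    refine this.congr_deriv ?_
    simp only [hG_def]
    push_cast
    ring
  -- continuity of G on [a,b]
  have hcontG : ContinuousOn G (Set.Icc a b) := by
    have hdv : ContinuousOn (deriv v) (Set.Ioi (0 : ℝ)) :=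
      hv.continuousOn_deriv_of_isOpen isOpen_Ioi le_rfl
    have hcv : ContinuousOn v (Set.Ioi (0 : ℝ)) := hv.continuousOn
    exact (((continuousOn_const.sub (hcv.pow 2)).mul hdv)).mono hsub
  have hintG : IntervalIntegrable G volume a b := by
    rw [intervalIntegrable_iff_integrableOn_Icc_of_le hab]
    exact hcontG.integrableOn_Icc
  have hintAbsG : IntervalIntegrable (fun r => |G r|) volume a b := hintG.abs
  have hftc : ∫ r in a..b, G r = g b - g a :=
    intervalIntegral.integral_eq_sub_of_hasDerivAt hderiv hintG
  have hgap : g b - g a = 4 / 3 := by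
    simp only [hg_def, hva, hvb]; norm_num
  have h43 : (4 : ℝ) / 3 ≤ ∫ r in a..b, |G r| := by
    calc (4 : ℝ) / 3 = ∫ r in a..b, G r := by rw [hftc, hgap]
    _ ≤ |∫ r in a..b, G r| := le_abs_self _
    _ ≤ ∫ r in a..b, |G r| := intervalIntegral.abs_integral_le_integral_abs hab
  -- pass to lintegral
  have hIoc : IntegrableOn (fun r => |G r|) (Set.Ioc a b) volume :=
    (hcontG.abs.integrableOn_Icc).mono_set Set.Ioc_subset_Icc_self
  have hof : ENNReal.ofReal (∫ r in a..b, |G r|)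
      = ∫⁻ r in Set.Ioc a b, ENNReal.ofReal (|G r|) := by
    rw [intervalIntegral.integral_of_le hab]
    exact ofReal_integral_eq_lintegral_ofReal hIoc
      (Filter.Eventually.of_forall fun r => abs_nonneg _)
  have hpt : ∀ r : ℝ, |G r| ≤
      ε / 2 * (deriv v r) ^ 2 + 1 / (2 * ε) * ((v r) ^ 2 - 1) ^ 2 := by
    intro r
    have h1 : |G r| = |deriv v r| * |v r ^ 2 - 1| := by
      rw [hG_def]
      rw [abs_mul, abs_sub_comm]
      ring
    rw [h1]
    have h2 : (0:ℝ) ≤ |deriv v r| := abs_nonneg _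
    have h3 : (0:ℝ) ≤ |v r ^ 2 - 1| := abs_nonneg _
    have h4 : |deriv v r| ^ 2 = (deriv v r) ^ 2 := sq_abs _
    have h5 : |v r ^ 2 - 1| ^ 2 = (v r ^ 2 - 1) ^ 2 := sq_abs _
    have key := sq_nonneg (ε * |deriv v r| - |v r ^ 2 - 1|)
    have hε' : (0:ℝ) < 2 * ε := by linarith
    have h6 : ε / 2 * deriv v r ^ 2 + 1 / (2 * ε) * (v r ^ 2 - 1) ^ 2
        = (ε ^ 2 * deriv v r ^ 2 + (v r ^ 2 - 1) ^ 2) / (2 * ε) := by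
      field_simp
    rw [h6, le_div_iff₀ hε']
    nlinarith [key, h4, h5]
  calc ENNReal.ofReal (4 / 3)
      ≤ ENNReal.ofReal (∫ r in a..b, |G r|) := ENNReal.ofReal_le_ofReal h43
    _ = ∫⁻ r in Set.Ioc a b, ENNReal.ofReal (|G r|) := hof
    _ ≤ ∫⁻ r in Set.Ioc a b, ENNReal.ofReal
          (ε / 2 * (deriv v r) ^ 2 + 1 / (2 * ε) * ((v r) ^ 2 - 1) ^ 2) :=
        lintegral_mono fun r => ENNReal.ofReal_le_ofReal (hpt r)
    _ ≤ ∫⁻ r in Set.Ioi (0 : ℝ), ENNReal.ofReal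
          (ε / 2 * (deriv v r) ^ 2 + 1 / (2 * ε) * ((v r) ^ 2 - 1) ^ 2) :=
        lintegral_mono_set (Set.Ioc_subset_Icc_self.trans hsub)
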